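/- Let P be a u–v path in the whirl graph contained in G_{≤M} with an edge e ∈ E_M, where u, v ∈ V_{M−1}, and let x < y be the two consecutive elements of V_{M−1} bounding an interval [x, y] containing both endvertices of e. Then P contains the subpath of the Hamilton path G_M between x and y, namely the path (3k/3^M)((3k+2)/3^M)((3k+1)/3^M)((3k+3)/3^M) where x = 3k/3^M. -/

import Mathlib

open SimpleGraph

/-- The `n`-th vertex level of the whirl graph: `V_n = {i/3^n : 0 ≤ i ≤ 3^n}`. -/
def Vn (n : ℕ) : Set ℚ := {q | ∃ i : ℕ, i ≤ 3 ^ n ∧ q = (i : ℚ) / 3 ^ n}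

/-- The `n`-th edge level of the whirl graph. -/
def En (n : ℕ) : Set (Sym2 ℚ) :=
  {e | ∃ k : ℕ, k < 3 ^ (n - 1) ∧
    (e = s(((3 * k : ℕ) : ℚ) / 3 ^ n, ((3 * k + 2 : ℕ) : ℚ) / 3 ^ n) ∨
     e = s(((3 * k + 1 : ℕ) : ℚ) / 3 ^ n, ((3 * k + 2 : ℕ) : ℚ) / 3 ^ n) ∨
     e = s(((3 * k + 1 : ℕ) : ℚ) / 3 ^ n, ((3 * k + 3 : ℕ) : ℚ) / 3 ^ n))}

/-- The vertex set `V = ⋃_{n ≥ 1} V_n` of the whirl graph. -/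
def whirlV : Set ℚ := ⋃ n ≥ 1, Vn n

/-- The whirl graph `G`, as a simple graph on `ℚ` with edge set `⋃_{n ≥ 1} E_n`. -/
def whirl : SimpleGraph ℚ := fromEdgeSet (⋃ n ≥ 1, En n)

/-- `G_{≤ n} = (V_n, E_1 ∪ ⋯ ∪ E_n)`. -/
def Gle (n : ℕ) : SimpleGraph ℚ := fromEdgeSet (⋃ k ∈ Set.Icc 1 n, En k)

/-- `G_{≥ n} = (V, ⋃_{k ≥ n} E_k)`. -/
def Gge (n : ℕ) : SimpleGraph ℚ := fromEdgeSet (⋃ k ≥ n, En k)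

/-- Two walks are edge-disjoint if they share no edge. -/
def WalkEdgeDisjoint {V : Type*} {G : SimpleGraph V} {u v : V}
    (p q : G.Walk u v) : Prop :=
  ∀ e, e ∈ p.edges → e ∉ q.edges

/-- Two lists (of supports of paths) traverse their common entries in the same order. -/
def ListCompat {α : Type*} [DecidableEq α] (l₁ l₂ : List α) : Prop :=
  ∀ x y, x ∈ l₁ → y ∈ l₁ → x ∈ l₂ → y ∈ l₂ →
    (l₁.idxOf x ≤ l₁.idxOf y ↔ l₂.idxOf x ≤ l₂.idxOf y)

lemma div_eq_nat (M j a b : ℕ) (hj : j ≤ M) (h : (a:ℚ)/3^M = (b:ℚ)/3^j) :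
    a = b * 3^(M-j) := by
  rw [div_eq_div_iff (by positivity) (by positivity)] at h
  have h3 : (3:ℚ)^M = 3^(M-j) * 3^j := by rw [← pow_add]; congr 1; omega
  rw [h3, ← mul_assoc] at h
  have := mul_right_cancel₀ (by positivity : ((3:ℚ)^j) ≠ 0) h
  exact_mod_cast this

lemma numeq (M j a b : ℕ) (hj : j ≤ M) (ha : a % 3 ≠ 0)
    (h : (a:ℚ)/3^M = (b:ℚ)/3^j) : j = M ∧ a = b := by
  have key := div_eq_nat M j a b hj h
  rcases Nat.eq_or_lt_of_le hj with he | hlt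
  · subst he; simp at key; exact ⟨rfl, key⟩
  · exfalso
    obtain ⟨c, hc⟩ := dvd_pow_self 3 (by omega : M - j ≠ 0)
    have h3 : 3 ∣ a := ⟨b*c, by rw [key, hc]; ring⟩
    omega

lemma injQ (M a b : ℕ) (h : (a:ℚ)/3^M = (b:ℚ)/3^M) : a = b := by
  have := div_eq_nat M M a b le_rfl h; simpa using this

lemma leQ (M a b : ℕ) (h : (a:ℚ)/3^M ≤ (b:ℚ)/3^M) : a ≤ b := by
  rw [div_le_div_iff_of_pos_right (by positivity)] at h
  exact_mod_cast h

lemma not_in_lower (M a : ℕ) (hM : 1 ≤ M) (ha : a % 3 ≠ 0) :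
    ((a:ℚ)/3^M) ∉ Vn (M-1) := by
  rintro ⟨i, hi, hq⟩
  have := numeq M (M-1) a i (by omega) ha hq
  omega

/-- The only possible neighbours of `(3k+1)/3^M` in `Gle M` are `(3k+2)/3^M` and
`(3k+3)/3^M`. -/
lemma adj_one (M k : ℕ) (z : ℚ)
    (h : (Gle M).Adj (((3 * k + 1 : ℕ) : ℚ) / 3 ^ M) z) :
    z = ((3 * k + 2 : ℕ) : ℚ) / 3 ^ M ∨ z = ((3 * k + 3 : ℕ) : ℚ) / 3 ^ M := by
  rw [Gle, fromEdgeSet_adj] at h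
  obtain ⟨hmem, hne⟩ := h
  simp only [Set.mem_iUnion] at hmem
  obtain ⟨j, hj, k', hk', hc⟩ := hmem
  have hjM : j ≤ M := hj.2
  rcases hc with hc | hc | hc <;> rw [Sym2.eq_iff] at hc <;>
      rcases hc with ⟨h1, h2⟩ | ⟨h1, h2⟩
  · exact absurd (numeq M j _ _ hjM (by omega) h1).2 (by omega)
  · exact absurd (numeq M j _ _ hjM (by omega) h1).2 (by omega)
  · obtain ⟨hje, hab⟩ := numeq M j _ _ hjM (by omega) h1
    have hkk : k' = k := by omega
    subst hje; subst hkk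
    exact Or.inl h2
  · exact absurd (numeq M j _ _ hjM (by omega) h1).2 (by omega)
  · obtain ⟨hje, hab⟩ := numeq M j _ _ hjM (by omega) h1
    have hkk : k' = k := by omega
    subst hje; subst hkk
    exact Or.inr h2
  · exact absurd (numeq M j _ _ hjM (by omega) h1).2 (by omega)

/-- The only possible neighbours of `(3k+2)/3^M` in `Gle M` are `(3k)/3^M` and
`(3k+1)/3^M`. -/
lemma adj_two (M k : ℕ) (z : ℚ)
    (h : (Gle M).Adj (((3 * k + 2 : ℕ) : ℚ) / 3 ^ M) z) :
    z = ((3 * k : ℕ) : ℚ) / 3 ^ M ∨ z = ((3 * k + 1 : ℕ) : ℚ) / 3 ^ M := by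
  rw [Gle, fromEdgeSet_adj] at h
  obtain ⟨hmem, hne⟩ := h
  simp only [Set.mem_iUnion] at hmem
  obtain ⟨j, hj, k', hk', hc⟩ := hmem
  have hjM : j ≤ M := hj.2
  rcases hc with hc | hc | hc <;> rw [Sym2.eq_iff] at hc <;>
      rcases hc with ⟨h1, h2⟩ | ⟨h1, h2⟩
  · exact absurd (numeq M j _ _ hjM (by omega) h1).2 (by omega)
  · obtain ⟨hje, hab⟩ := numeq M j _ _ hjM (by omega) h1
    have hkk : k' = k := by omega
    subst hje; subst hkk
    exact Or.inl h2
  · exact absurd (numeq M j _ _ hjM (by omega) h1).2 (by omega)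
  · obtain ⟨hje, hab⟩ := numeq M j _ _ hjM (by omega) h1
    have hkk : k' = k := by omega
    subst hje; subst hkk
    exact Or.inr h2
  · exact absurd (numeq M j _ _ hjM (by omega) h1).2 (by omega)
  · exact absurd (numeq M j _ _ hjM (by omega) h1).2 (by omega)

/-- An interior vertex of a path is incident to two distinct edges of the path. -/
lemma interior_two_edges {V : Type*} [DecidableEq V] {G : SimpleGraph V} {u v w : V}
    (p : G.Walk u v) (hp : p.IsPath) (hw : w ∈ p.support) (hwu : w ≠ u) (hwv : w ≠ v) :
    ∃ x y, x ≠ y ∧ s(w, x) ∈ p.edges ∧ s(w, y) ∈ p.edges := by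
  have hsp := p.take_spec hw
  obtain ⟨z, hadj, r', hre⟩ :=
    Walk.not_nil_iff.mp (Walk.not_nil_of_ne hwv : ¬ (p.dropUntil w hw).Nil)
  obtain ⟨z', hadj', q', hqe⟩ :=
    Walk.not_nil_iff.mp (Walk.not_nil_of_ne hwu : ¬ (p.takeUntil w hw).reverse.Nil)
  have hz : s(w, z) ∈ (p.dropUntil w hw).edges := by rw [hre]; simp
  have hz' : s(w, z') ∈ (p.takeUntil w hw).edges := by
    have : s(w, z') ∈ (p.takeUntil w hw).reverse.edges := by rw [hqe]; simp
    rwa [Walk.edges_reverse, List.mem_reverse] at this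
  have hedges : p.edges = (p.takeUntil w hw).edges ++ (p.dropUntil w hw).edges := by
    conv_lhs => rw [← hsp]
    rw [Walk.edges_append]
  have hnd := hp.edges_nodup
  rw [hedges] at hnd
  refine ⟨z', z, ?_, ?_, ?_⟩
  · rintro rfl
    exact (List.disjoint_of_nodup_append hnd) hz' hz
  · rw [hedges]; exact List.mem_append_left _ hz'
  · rw [hedges]; exact List.mem_append_right _ hz

theorem stmt10 (M : ℕ) (hM : 1 ≤ M) (u v : ℚ)
    (hu : u ∈ Vn (M - 1)) (hv : v ∈ Vn (M - 1))
    (P : (Gle M).Walk u v) (hP : P.IsPath)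
    (e : Sym2 ℚ) (he : e ∈ P.edges) (heM : e ∈ En M)
    (k : ℕ) (hk : k < 3 ^ (M - 1))
    (hbound : ∀ z ∈ e, ((3 * k : ℕ) : ℚ) / 3 ^ M ≤ z ∧ z ≤ ((3 * k + 3 : ℕ) : ℚ) / 3 ^ M) :
    s(((3 * k : ℕ) : ℚ) / 3 ^ M, ((3 * k + 2 : ℕ) : ℚ) / 3 ^ M) ∈ P.edges ∧
    s(((3 * k + 2 : ℕ) : ℚ) / 3 ^ M, ((3 * k + 1 : ℕ) : ℚ) / 3 ^ M) ∈ P.edges ∧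
    s(((3 * k + 1 : ℕ) : ℚ) / 3 ^ M, ((3 * k + 3 : ℕ) : ℚ) / 3 ^ M) ∈ P.edges := by
  set A : ℚ := ((3 * k : ℕ) : ℚ) / 3 ^ M with hA
  set B : ℚ := ((3 * k + 1 : ℕ) : ℚ) / 3 ^ M with hB
  set C : ℚ := ((3 * k + 2 : ℕ) : ℚ) / 3 ^ M with hC
  set D : ℚ := ((3 * k + 3 : ℕ) : ℚ) / 3 ^ M with hD
  -- B and C are not in V_{M-1}, hence differ from u and v
  have hBu : B ≠ u := fun h => not_in_lower M (3*k+1) hM (by omega) (by rw [← hB, h]; exact hu)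
  have hBv : B ≠ v := fun h => not_in_lower M (3*k+1) hM (by omega) (by rw [← hB, h]; exact hv)
  have hCu : C ≠ u := fun h => not_in_lower M (3*k+2) hM (by omega) (by rw [← hC, h]; exact hu)
  have hCv : C ≠ v := fun h => not_in_lower M (3*k+2) hM (by omega) (by rw [← hC, h]; exact hv)
  -- step 1 : B ∈ P.support or C ∈ P.support
  have hstep1 : B ∈ P.support ∨ C ∈ P.support := by
    obtain ⟨k', hk', hc⟩ := heM
    rcases hc with hc | hc | hc
    · -- e = s(3k', 3k'+2); the endpoint (3k'+2)/3^M lies in [3k,3k+3]/3^M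
      have hm : (((3 * k' + 2 : ℕ) : ℚ) / 3 ^ M) ∈ e := by
        rw [hc]; exact Sym2.mem_mk_right _ _
      obtain ⟨hb1, hb2⟩ := hbound _ hm
      have h1 := leQ M _ _ hb1
      have h2 := leQ M _ _ hb2
      have hkk : k' = k := by omega
      subst hkk
      right
      exact P.snd_mem_support_of_mem_edges (by rwa [hc] at he)
    · have hm : (((3 * k' + 1 : ℕ) : ℚ) / 3 ^ M) ∈ e := by
        rw [hc]; exact Sym2.mem_mk_left _ _
      obtain ⟨hb1, hb2⟩ := hbound _ hm
      have h1 := leQ M _ _ hb1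
      have h2 := leQ M _ _ hb2
      have hkk : k' = k := by omega
      subst hkk
      left
      exact P.fst_mem_support_of_mem_edges (by rwa [hc] at he)
    · have hm : (((3 * k' + 1 : ℕ) : ℚ) / 3 ^ M) ∈ e := by
        rw [hc]; exact Sym2.mem_mk_left _ _
      obtain ⟨hb1, hb2⟩ := hbound _ hm
      have h1 := leQ M _ _ hb1
      have h2 := leQ M _ _ hb2
      have hkk : k' = k := by omega
      subst hkk
      left
      exact P.fst_mem_support_of_mem_edges (by rwa [hc] at he)
  -- From B ∈ support we get both edges at B
  have atB : B ∈ P.support → s(B, C) ∈ P.edges ∧ s(B, D) ∈ P.edges := by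
    intro hBsup
    obtain ⟨x, y, hxy, hx, hy⟩ := interior_two_edges P hP hBsup hBu hBv
    have hx' := adj_one M k x (P.adj_of_mem_edges hx)
    have hy' := adj_one M k y (P.adj_of_mem_edges hy)
    rcases hx' with rfl | rfl <;> rcases hy' with rfl | rfl
    · exact absurd rfl hxy
    · exact ⟨hx, hy⟩
    · exact ⟨hy, hx⟩
    · exact absurd rfl hxy
  have atC : C ∈ P.support → s(C, A) ∈ P.edges ∧ s(C, B) ∈ P.edges := by
    intro hCsup
    obtain ⟨x, y, hxy, hx, hy⟩ := interior_two_edges P hP hCsup hCu hCv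
    have hx' := adj_two M k x (P.adj_of_mem_edges hx)
    have hy' := adj_two M k y (P.adj_of_mem_edges hy)
    rcases hx' with rfl | rfl <;> rcases hy' with rfl | rfl
    · exact absurd rfl hxy
    · exact ⟨hx, hy⟩
    · exact ⟨hy, hx⟩
    · exact absurd rfl hxy
  have hCsup : C ∈ P.support := by
    rcases hstep1 with hBsup | hCsup
    · exact P.snd_mem_support_of_mem_edges (atB hBsup).1
    · exact hCsup
  obtain ⟨hCA, hCB⟩ := atC hCsup
  have hBsup : B ∈ P.support := P.snd_mem_support_of_mem_edges hCB
  obtain ⟨hBC, hBD⟩ := atB hBsup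
  exact ⟨by rwa [Sym2.eq_swap] at hCA, hCB, hBD⟩
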